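/- Every finite simple graph G = (V,E) has a spanning subgraph H such that for every vertex v ∈ V: d_G(v)/2 − 1 < d_H(v) ≤ d_G(v)/2 + 1, where d_G(v) and d_H(v) denote the degrees of v in G and in H respectively. -/

import Mathlib

/-- The degree of a vertex `v` with respect to a set `E'` of edges:
the number of edges of `E'` incident with `v`. -/
noncomputable def edgeDeg {V : Type*} (E' : Set (Sym2 V)) (v : V) : ℕ :=
  {e ∈ E' | v ∈ e}.ncard


section Aux

variable {V : Type*} [DecidableEq V]

/-- The edges of a walk given by its list of vertices. -/
def walkEdges : List V → List (Sym2 V)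
  | a :: b :: l => s(a, b) :: walkEdges (b :: l)
  | _ => []

/-- Select alternate elements of a list, starting with "select" iff `c`. -/
def altSel (c : Bool) : List (Sym2 V) → List (Sym2 V)
  | [] => []
  | e :: l => if c then e :: altSel false l else altSel true l

/-- number of edges of the list containing `v` (with multiplicity) -/
def cnt (l : List (Sym2 V)) (v : V) : ℕ := (l.filter (fun e => v ∈ e)).length

@[simp] lemma cnt_nil (v : V) : cnt ([] : List (Sym2 V)) v = 0 := rfl

lemma cnt_cons (e : Sym2 V) (l : List (Sym2 V)) (v : V) :
    cnt (e :: l) v = (if v ∈ e then 1 else 0) + cnt l v := by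
  simp [cnt, List.filter_cons]
  split <;> simp [Nat.add_comm]

lemma cnt_altSel_cons (c : Bool) (e : Sym2 V) (l : List (Sym2 V)) (v : V) :
    cnt (altSel c (e :: l)) v
      = (if c then (if v ∈ e then 1 else 0) else 0) + cnt (altSel (!c) l) v := by
  cases c <;> simp [altSel, cnt_cons]

def sg (c : Bool) : ℤ := if c then 1 else -1

lemma corr_lemma (c : Bool) (a b v : V) (hab : a ≠ b) :
    2 * (if c then (if v ∈ s(a,b) then (1:ℤ) else 0) else 0)
      + (if v = b then sg (!c) else 0)
      = (if v ∈ s(a,b) then (1:ℤ) else 0) + (if v = a then sg c else 0) := by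
  cases c <;> by_cases hva : v = a <;> by_cases hvb : v = b <;>
    simp_all [Sym2.mem_iff, sg]

lemma key (l : List V) : ∀ (a b : V) (c : Bool),
    (∀ e ∈ walkEdges (a :: b :: l), ¬ e.IsDiag) → ∀ v : V,
    2 * (cnt (altSel c (walkEdges (a :: b :: l))) v : ℤ) =
      (cnt (walkEdges (a :: b :: l)) v : ℤ)
      + (if v = a then sg c else 0)
      + (if v = (b :: l).getLast (List.cons_ne_nil _ _) then
            sg (if l.length % 2 = 0 then c else !c) else 0) := by
  induction l with
  | nil =>
    intro a b c hd v
    have hab : a ≠ b := by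
      have := hd s(a, b) (by simp [walkEdges])
      simpa [Sym2.isDiag_iff_proj_eq] using this
    simp only [walkEdges, altSel]
    cases c <;>
      by_cases hva : v = a <;> by_cases hvb : v = b <;>
      simp_all [cnt_cons, Sym2.mem_iff, sg] <;> omega
  | cons x l ih =>
    intro a b c hd v
    have hwe : walkEdges (a :: b :: x :: l) = s(a, b) :: walkEdges (b :: x :: l) := rfl
    have hab : a ≠ b := by
      have := hd s(a, b) (by simp [walkEdges])
      simpa [Sym2.isDiag_iff_proj_eq] using this
    have hd' : ∀ e ∈ walkEdges (b :: x :: l), ¬ e.IsDiag := by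
      intro e he
      exact hd e (by rw [hwe]; exact List.mem_cons_of_mem _ he)
    have hlast : (b :: x :: l).getLast (List.cons_ne_nil _ _)
        = (x :: l).getLast (List.cons_ne_nil _ _) := List.getLast_cons _
    have hpar : (if (x :: l).length % 2 = 0 then c else !c)
        = (if l.length % 2 = 0 then !c else !(!c)) := by
      by_cases h0 : l.length % 2 = 0
      · have h1 : ¬ ((l.length + 1) % 2 = 0) := by omega
        simp [List.length_cons, h0, h1]
      · have h1 : (l.length + 1) % 2 = 0 := by omega
        simp [List.length_cons, h0, h1]
    have H := ih b x (!c) hd' v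
    have corr := corr_lemma c a b v hab
    rw [hwe, cnt_altSel_cons, cnt_cons, hlast, hpar]
    push_cast
    linarith [H, corr]

end Aux

section Aux2

variable {V : Type*} [DecidableEq V]

lemma altSel_sublist : ∀ (l : List (Sym2 V)) (c : Bool), List.Sublist (altSel c l) l := by
  intro l
  induction l with
  | nil => intro c; simp [altSel]
  | cons e l ih =>
    intro c
    cases c
    · show List.Sublist (altSel true l) (e :: l)
      exact (ih true).cons e
    · show List.Sublist (e :: altSel false l) (e :: l)
      exact (ih false).cons₂ e

lemma walkEdges_concat (w : V) : ∀ (L : List V) (h : L ≠ []),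
    walkEdges (L ++ [w]) = walkEdges L ++ [s(L.getLast h, w)] := by
  intro L
  induction L with
  | nil => simp
  | cons a L ih =>
    cases L with
    | nil => intro h; simp [walkEdges]
    | cons b l =>
      intro h
      have h' : (b :: l) ≠ [] := List.cons_ne_nil _ _
      have : ((a :: b :: l) ++ [w]) = a :: ((b :: l) ++ [w]) := by simp
      rw [this]
      show s(a, b) :: walkEdges ((b :: l) ++ [w]) = _
      rw [ih h', List.getLast_cons h']
      rfl

/-- degree of `v` w.r.t. a finite edge set -/
def degE (F : Finset (Sym2 V)) (v : V) : ℕ := (F.filter (fun e => v ∈ e)).card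

lemma degE_toFinset (l : List (Sym2 V)) (h : l.Nodup) (v : V) :
    degE l.toFinset v = cnt l v := by
  unfold degE cnt
  induction l with
  | nil => simp
  | cons e l ih =>
    have he : e ∈ l ∨ e ∉ l := em _
    rcases List.nodup_cons.mp h with ⟨hel, hnd⟩
    rw [List.toFinset_cons, List.filter_cons]
    by_cases hv : v ∈ e
    · rw [Finset.insert_eq, Finset.filter_union, Finset.filter_singleton, if_pos hv]
      rw [Finset.card_union_of_disjoint, Finset.card_singleton]
      · simp [hv, ih hnd]
        omega
      · simp only [Finset.disjoint_singleton_left, Finset.mem_filter, List.mem_toFinset]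
        exact fun hc => hel hc.1
    · rw [Finset.insert_eq, Finset.filter_union, Finset.filter_singleton, if_neg hv]
      simp [hv, ih hnd]

lemma degE_union (A B : Finset (Sym2 V)) (h : Disjoint A B) (v : V) :
    degE (A ∪ B) v = degE A v + degE B v := by
  unfold degE
  rw [Finset.filter_union, Finset.card_union_of_disjoint]
  exact Finset.disjoint_filter_filter h

lemma degE_mono {A B : Finset (Sym2 V)} (h : A ⊆ B) (v : V) : degE A v ≤ degE B v :=
  Finset.card_le_card (Finset.filter_subset_filter _ h)

lemma exists_half : ∀ (n : ℕ) (E : Finset (Sym2 V)), E.card ≤ n → (∀ e ∈ E, ¬ e.IsDiag) →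
    ∃ F ⊆ E, ∀ v, degE E v / 2 ≤ degE F v ∧ degE F v ≤ degE E v / 2 + 1 := by
  intro n
  induction n with
  | zero =>
    intro E hcard _
    have : E = ∅ := Finset.card_eq_zero.mp (Nat.le_zero.mp hcard)
    subst this
    exact ⟨∅, Finset.Subset.refl _, fun v => by simp [degE]⟩
  | succ n ih =>
    intro E hcard hE
    by_cases hemp : E = ∅
    · subst hemp
      exact ⟨∅, Finset.Subset.refl _, fun v => by simp [degE]⟩
    obtain ⟨e₀, he₀⟩ := Finset.nonempty_of_ne_empty hemp
    obtain ⟨a₁, b₁, rfl⟩ : ∃ x y, e₀ = s(x, y) := by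
      induction e₀ using Sym2.ind with | _ x y => exact ⟨x, y, rfl⟩
    have hab₁ : a₁ ≠ b₁ := by
      have := hE _ he₀
      simpa [Sym2.isDiag_iff_proj_eq] using this
    -- trails
    set P : ℕ → Prop := fun m => ∃ L : List V, (walkEdges L).Nodup ∧
      (∀ e ∈ walkEdges L, e ∈ E) ∧ (walkEdges L).length = m with hP
    have hbound : ∀ m, P m → m ≤ E.card := by
      rintro m ⟨L, hnd, hmem, hlen⟩
      calc m = (walkEdges L).toFinset.card := by rw [List.toFinset_card_of_nodup hnd, hlen]
      _ ≤ E.card := Finset.card_le_card (fun e he => hmem e (List.mem_toFinset.mp he))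
    have hP1 : P 1 := by
      refine ⟨[a₁, b₁], ?_, ?_, ?_⟩ <;> simp [walkEdges, he₀]
    classical
    set N := Nat.findGreatest P E.card with hN
    have hPN : P N := Nat.findGreatest_spec (hbound 1 hP1) hP1
    have hmax : ∀ m, N < m → ¬ P m := fun m hm hPm =>
      Nat.findGreatest_is_greatest hm (hbound m hPm) hPm
    have hN1 : 1 ≤ N := Nat.le_findGreatest (hbound 1 hP1) hP1
    obtain ⟨L, hnd, hmem, hlen⟩ := hPN
    rcases L with _ | ⟨a, L⟩
    · simp [walkEdges] at hlen; omega
    rcases L with _ | ⟨b, l⟩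
    · simp [walkEdges] at hlen; omega
    set es := walkEdges (a :: b :: l) with hes
    set lst := (b :: l).getLast (List.cons_ne_nil _ _) with hlst
    -- endpoint exhaustion
    have hexh_last : ∀ e ∈ E, lst ∈ e → e ∈ es := by
      intro e heE hve
      by_contra hne
      obtain ⟨w, rfl⟩ := Sym2.mem_iff_exists.mp hve
      have hL : (a :: b :: l) ≠ [] := List.cons_ne_nil _ _
      have hgl : (a :: b :: l).getLast hL = lst := List.getLast_cons _
      have hwe : walkEdges ((a :: b :: l) ++ [w]) = es ++ [s(lst, w)] := by
        rw [walkEdges_concat w _ hL, hgl]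
      refine hmax (N + 1) (Nat.lt_succ_self N) ⟨(a :: b :: l) ++ [w], ?_, ?_, ?_⟩
      · rw [hwe]
        simp only [List.nodup_append, List.nodup_cons, List.nodup_nil, and_true]
        exact ⟨hnd, by simp, by simp; intro x hx hxe; exact hne (hxe ▸ hx)⟩
      · intro e he
        rw [hwe] at he
        rcases List.mem_append.mp he with h | h
        · exact hmem e h
        · simp at h; subst h; exact heE
      · rw [hwe]; simp [hlen]
    have hexh_head : ∀ e ∈ E, a ∈ e → e ∈ es := by
      intro e heE hve
      by_contra hne
      obtain ⟨w, rfl⟩ := Sym2.mem_iff_exists.mp hve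
      have hwe : walkEdges (w :: a :: b :: l) = s(w, a) :: es := rfl
      refine hmax (N + 1) (Nat.lt_succ_self N) ⟨w :: a :: b :: l, ?_, ?_, ?_⟩
      · rw [hwe, List.nodup_cons]
        refine ⟨?_, hnd⟩
        rw [Sym2.eq_swap]
        exact hne
      · intro e he
        rw [hwe] at he
        rcases List.mem_cons.mp he with h | h
        · subst h; rwa [Sym2.eq_swap]
        · exact hmem e h
      · rw [hwe]; simp [hlen]
    -- remove the trail, apply IH
    set T := es.toFinset with hT
    have hTsub : T ⊆ E := fun e he => hmem e (List.mem_toFinset.mp he)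
    have hTcard : T.card = N := by rw [hT, List.toFinset_card_of_nodup hnd, hlen]
    set E2 := E \ T with hE2
    have hcard2 : E2.card ≤ n := by
      rw [hE2, Finset.card_sdiff_of_subset hTsub, hTcard]
      omega
    obtain ⟨F', hF'sub, hF'⟩ := ih E2 hcard2 (fun e he => hE e (Finset.mem_sdiff.mp he).1)
    set R := (altSel true es).toFinset with hR
    have hselnd : (altSel true es).Nodup := (altSel_sublist es true).nodup hnd
    have hRsubT : R ⊆ T := fun e he => by
      rw [hT, List.mem_toFinset]
      exact (altSel_sublist es true).mem (List.mem_toFinset.mp he)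
    refine ⟨F' ∪ R, ?_, ?_⟩
    · intro e he
      rcases Finset.mem_union.mp he with h | h
      · exact (Finset.sdiff_subset) (hF'sub h)
      · exact hTsub (hRsubT h)
    intro v
    have hdisj : Disjoint F' R :=
      Finset.disjoint_left.mpr fun e he hR' =>
        (Finset.mem_sdiff.mp (hF'sub he)).2 (hRsubT hR')
    have hsplitF : degE (F' ∪ R) v = degE F' v + degE R v := degE_union _ _ hdisj v
    have hsplitE : degE E v = degE E2 v + degE T v := by
      have hdisj2 : Disjoint E2 T := Finset.sdiff_disjoint
      have : E2 ∪ T = E := Finset.sdiff_union_of_subset hTsub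
      rw [← this, degE_union _ _ hdisj2]
    have hdT : degE T v = cnt es v := degE_toFinset es hnd v
    have hdR : degE R v = cnt (altSel true es) v := degE_toFinset _ hselnd v
    have hdiag : ∀ e ∈ es, ¬ e.IsDiag := fun e he => hE e (hmem e he)
    have K := key l a b true hdiag v
    have hsg : ∀ c : Bool, sg c = 1 ∨ sg c = -1 := by intro c; cases c <;> simp [sg]
    obtain ⟨A, B, hK, hA1, hA2, hB1, hB2⟩ :
        ∃ A B : ℤ, 2 * (cnt (altSel true es) v : ℤ) = (cnt es v : ℤ) + A + B ∧
          0 ≤ A ∧ A ≤ 1 ∧ -1 ≤ B ∧ B ≤ 1 := by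
      refine ⟨_, _, K, ?_, ?_, ?_, ?_⟩ <;> split_ifs <;> norm_num [sg]
    have f1 : (cnt es v : ℤ) - 1 ≤ 2 * (cnt (altSel true es) v : ℤ) ∧
        2 * (cnt (altSel true es) v : ℤ) ≤ (cnt es v : ℤ) + 2 := by
      constructor <;> omega
    have f2 : v ≠ a → v ≠ lst → 2 * (cnt (altSel true es) v : ℤ) = (cnt es v : ℤ) := by
      intro h1 h2
      rw [K, if_neg h1, if_neg h2]
      ring
    obtain ⟨ih1, ih2⟩ := hF' v
    by_cases hend : v = a ∨ v = lst
    · -- endpoint: all incident edges are in the trail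
      have hd2 : degE E2 v = 0 := by
        rw [degE, Finset.card_eq_zero, Finset.filter_eq_empty_iff]
        intro e he hve
        rcases Finset.mem_sdiff.mp he with ⟨heE, heT⟩
        apply heT
        rw [hT, List.mem_toFinset]
        rcases hend with h | h
        · exact hexh_head e heE (h ▸ hve)
        · exact hexh_last e heE (h ▸ hve)
      have hf'0 : degE F' v = 0 :=
        Nat.le_zero.mp (hd2 ▸ degE_mono hF'sub v)
      rw [hsplitF, hsplitE, hd2, hf'0, hdT, hdR]
      omega
    · push_neg at hend
      have := f2 hend.1 hend.2
      rw [hsplitF, hsplitE, hdT, hdR]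
      omega

end Aux2


/-- Every finite simple graph `G` has a spanning subgraph `H` with
`d_G(v)/2 − 1 < d_H(v) ≤ d_G(v)/2 + 1` for every vertex `v`. -/
theorem half_degree_spanning_subgraph
    {V : Type*} [Fintype V] (G : SimpleGraph V) [DecidableRel G.Adj] :
    ∃ E' ⊆ G.edgeSet, ∀ v : V,
      (G.degree v : ℝ) / 2 - 1 < (edgeDeg E' v : ℝ) ∧
      (edgeDeg E' v : ℝ) ≤ (G.degree v : ℝ) / 2 + 1 := by
  classical
  set E := G.edgeFinset with hEdef
  have hE : ∀ e ∈ E, ¬ e.IsDiag := fun e he =>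
    G.not_isDiag_of_mem_edgeSet (SimpleGraph.mem_edgeFinset.mp he)
  obtain ⟨F, hFsub, hF⟩ := exists_half E.card E le_rfl hE
  refine ⟨(↑F : Set (Sym2 V)), ?_, ?_⟩
  · intro e he
    rw [← SimpleGraph.mem_edgeFinset]
    exact hFsub he
  intro v
  have hdeg : degE E v = G.degree v := by
    rw [← SimpleGraph.card_incidenceFinset_eq_degree, SimpleGraph.incidenceFinset_eq_filter]
    rfl
  have hcnt : edgeDeg (↑F : Set (Sym2 V)) v = degE F v := by
    unfold edgeDeg degE
    rw [← Set.ncard_coe_finset]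
    congr 1
    ext e
    simp
  obtain ⟨h1, h2⟩ := hF v
  rw [hdeg] at h1 h2
  rw [hcnt]
  have hz1 : (G.degree v : ℝ) ≤ 2 * (degE F v : ℝ) + 1 := by
    have : G.degree v ≤ 2 * degE F v + 1 := by omega
    exact_mod_cast this
  have hz2 : 2 * (degE F v : ℝ) ≤ (G.degree v : ℝ) + 2 := by
    have : 2 * degE F v ≤ G.degree v + 2 := by omega
    exact_mod_cast this
  constructor <;> linarith
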